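/- For every positive integer n, let p_n ∈ (0,1) be the unique fixed point of P_n in (0,1). Then the derivative of P_n at the fixed point satisfies |P_n'(p_n)| < 1. -/

import Mathlib

open Real Filter Topology

open Set

noncomputable def lG (x : ℝ) : ℝ := Real.log (Real.Gamma x)
noncomputable def psi (x : ℝ) : ℝ := deriv lG x

lemma diffAt_lG {x : ℝ} (hx : 0 < x) : DifferentiableAt ℝ lG x := by
  have h1 : DifferentiableAt ℝ Real.Gamma x :=
    Real.differentiableAt_Gamma (fun m => by
      have : (0:ℝ) ≤ m := Nat.cast_nonneg m
      intro h; rw [h] at hx; linarith)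
  exact h1.log (Real.Gamma_pos_of_pos hx).ne'

lemma hasDerivAt_lG {x : ℝ} (hx : 0 < x) : HasDerivAt lG (psi x) x :=
  (diffAt_lG hx).hasDerivAt

lemma lG_add_one {x : ℝ} (hx : 0 < x) : lG (x + 1) = Real.log x + lG x := by
  unfold lG
  rw [Real.Gamma_add_one hx.ne', Real.log_mul hx.ne' (Real.Gamma_pos_of_pos hx).ne']

lemma convexOn_lG : ConvexOn ℝ (Ioi 0) lG := Real.convexOn_log_Gamma

-- ψ(x+1) ≤ log (x+1)
lemma psi_le {x : ℝ} (hx : 0 < x) : psi (x + 1) ≤ Real.log (x + 1) := by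
  have h := convexOn_lG.le_slope_of_hasDerivAt (S := Ioi 0)
    (by simp; linarith : x + 1 ∈ Ioi (0:ℝ)) (by simp; linarith : x + 2 ∈ Ioi (0:ℝ))
    (by linarith) (hasDerivAt_lG (by linarith))
  have hs : slope lG (x+1) (x+2) = Real.log (x+1) := by
    have h2 : lG (x + 2) = Real.log (x+1) + lG (x+1) := by
      have := lG_add_one (x := x + 1) (by linarith)
      rw [show x + 1 + 1 = x + 2 by ring] at this
      exact this
    rw [slope_def_field, h2, show x + 2 - (x+1) = 1 by ring, div_one]; ring
  rw [hs] at h; exact h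

-- midpoint convexity: lG(y+1/2) ≤ (lG y + lG (y+1))/2, hence g y ≥ (1/2) log y where g y = lG(y+1) - lG(y+1/2)
lemma g_upper {y : ℝ} (hy : 0 < y) : lG (y + 1) - lG (y + 1/2) ≤ (1/2) * Real.log (y + 1/2) := by
  -- lG (y+1) ≤ (lG (y+1/2) + lG (y+3/2))/2
  have h := convexOn_lG.2 (x := y + 1/2) (y := y + 3/2)
    (by simp; linarith) (by simp; linarith)
    (by norm_num : (0:ℝ) ≤ 1/2) (by norm_num : (0:ℝ) ≤ 1/2) (by norm_num)
  have he : (1/2 : ℝ) • (y + 1/2) + (1/2 : ℝ) • (y + 3/2) = y + 1 := by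
    simp [smul_eq_mul]; ring
  rw [he, smul_eq_mul, smul_eq_mul] at h
  have hfe : lG (y + 3/2) = Real.log (y + 1/2) + lG (y + 1/2) := by
    have := lG_add_one (x := y + 1/2) (by linarith)
    rw [show y + 1/2 + 1 = y + 3/2 by ring] at this
    exact this
  rw [hfe] at h; linarith

-- ψ(x+1) ≥ 2 log(x+1/2) - log(x+1)
lemma psi_ge {x : ℝ} (hx : 0 < x) :
    2 * Real.log (x + 1/2) - Real.log (x + 1) ≤ psi (x + 1) := by
  have h := convexOn_lG.slope_le_of_hasDerivAt (S := Ioi 0)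
    (by simp; linarith : x + 1/2 ∈ Ioi (0:ℝ)) (by simp; linarith : x + 1 ∈ Ioi (0:ℝ))
    (by linarith) (hasDerivAt_lG (by linarith))
  have hs : slope lG (x+1/2) (x+1) = 2 * (lG (x+1) - lG (x+1/2)) := by
    rw [slope_def_field]
    have : x + 1 - (x + 1/2) = 1/2 := by ring
    rw [this]; ring
  rw [hs] at h
  -- g x = lG(x+1) - lG(x+1/2) ≥ log(x+1/2) - (1/2) log(x+1)
  have hg2 : lG (x + 3/2) - lG (x + 1) ≤ (1/2) * Real.log (x + 1) := by
    have := g_upper (y := x + 1/2) (by linarith)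
    rw [show x + 1/2 + 1 = x + 3/2 by ring, show x + 1/2 + 1/2 = x + 1 by ring] at this
    exact this
  have hfe : lG (x + 3/2) = Real.log (x + 1/2) + lG (x + 1/2) := by
    have := lG_add_one (x := x + 1/2) (by linarith)
    rw [show x + 1/2 + 1 = x + 3/2 by ring] at this
    exact this
  rw [hfe] at hg2
  linarith

-- ψ(x+1) ≥ log x
lemma psi_ge' {x : ℝ} (hx : 0 < x) : Real.log x ≤ psi (x + 1) := by
  refine le_trans ?_ (psi_ge hx)
  have h1 : Real.log x + Real.log (x+1) ≤ 2 * Real.log (x + 1/2) := by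
    rw [show 2 * Real.log (x + 1/2) = Real.log (x+1/2) + Real.log (x+1/2) by ring,
      ← Real.log_mul hx.ne' (by linarith), ← Real.log_mul (by linarith) (by linarith)]
    apply Real.log_le_log (by positivity)
    nlinarith
  linarith

/-- Generalized binomial coefficient `binom(n, α) = n! / (Γ(α+1)·Γ(n-α+1))`. -/
noncomputable def gbinom (n : ℕ) (a : ℝ) : ℝ :=
  (n.factorial : ℝ) / (Real.Gamma (a + 1) * Real.Gamma ((n : ℝ) - a + 1))

/-- The function `P_n(p) = binom(n, np) · p^(np) · (1-p)^(n(1-p))`. -/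
noncomputable def Pn (n : ℕ) (p : ℝ) : ℝ :=
  gbinom n ((n : ℝ) * p) * p ^ ((n : ℝ) * p) * (1 - p) ^ ((n : ℝ) * (1 - p))

noncomputable def Lf (n : ℕ) (x : ℝ) : ℝ :=
  Real.log (n.factorial : ℝ) - lG ((n:ℝ)*x + 1) - lG ((n:ℝ)*(1-x) + 1)
    + Real.log x * ((n:ℝ)*x) + Real.log (1-x) * ((n:ℝ)*(1-x))

lemma Pn_eq_exp_Lf (n : ℕ) {x : ℝ} (hx : x ∈ Ioo (0:ℝ) 1) : Pn n x = Real.exp (Lf n x) := by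
  obtain ⟨hx0, hx1⟩ := hx
  have h1x : 0 < 1 - x := by linarith
  have hG1 : 0 < Real.Gamma ((n:ℝ)*x + 1) := Real.Gamma_pos_of_pos (by positivity)
  have hG2 : 0 < Real.Gamma ((n:ℝ)*(1-x) + 1) := Real.Gamma_pos_of_pos (by positivity)
  have hfac : (0:ℝ) < (n.factorial : ℝ) := by exact_mod_cast n.factorial_pos
  rw [Lf, Real.exp_add, Real.exp_add, Real.exp_sub, Real.exp_sub]
  rw [Real.exp_log hfac]
  rw [lG, lG, Real.exp_log hG1, Real.exp_log hG2]
  rw [← Real.rpow_def_of_pos hx0, ← Real.rpow_def_of_pos h1x]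
  rw [Pn, gbinom, show (n:ℝ) - (n:ℝ)*x = (n:ℝ)*(1-x) by ring]
  field_simp

lemma hasDerivAt_Lf (n : ℕ) {p : ℝ} (hp : p ∈ Ioo (0:ℝ) 1) :
    HasDerivAt (Lf n)
      ((n:ℝ) * (psi ((n:ℝ)*(1-p)+1) - psi ((n:ℝ)*p+1) + Real.log p - Real.log (1-p))) p := by
  obtain ⟨hp0, hp1⟩ := hp
  have h1p : 0 < 1 - p := by linarith
  have hin1 : HasDerivAt (fun x : ℝ => (n:ℝ)*x + 1) (n:ℝ) p := by
    simpa using ((hasDerivAt_id p).const_mul (n:ℝ)).add_const 1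
  have hin2 : HasDerivAt (fun x : ℝ => (n:ℝ)*(1-x) + 1) (-(n:ℝ)) p := by
    simpa using (((hasDerivAt_const p (1:ℝ)).sub (hasDerivAt_id p)).const_mul (n:ℝ)).add_const 1
  have h1 : HasDerivAt (fun x : ℝ => lG ((n:ℝ)*x + 1)) (psi ((n:ℝ)*p+1) * (n:ℝ)) p :=
    (hasDerivAt_lG (by positivity)).comp p hin1
  have h2 : HasDerivAt (fun x : ℝ => lG ((n:ℝ)*(1-x) + 1)) (psi ((n:ℝ)*(1-p)+1) * (-(n:ℝ))) p :=
    (hasDerivAt_lG (by positivity)).comp p hin2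
  have h3 : HasDerivAt (fun x : ℝ => Real.log x * ((n:ℝ)*x))
      (Real.log p * (n:ℝ) + (n:ℝ)) p := by
    have := (Real.hasDerivAt_log hp0.ne').mul (((hasDerivAt_id p).const_mul (n:ℝ)))
    refine this.congr_deriv ?_
    field_simp
    rw [id_eq]
    ring
  have h4 : HasDerivAt (fun x : ℝ => Real.log (1-x) * ((n:ℝ)*(1-x)))
      (-(Real.log (1-p) * (n:ℝ)) - (n:ℝ)) p := by
    have hlog : HasDerivAt (fun x : ℝ => Real.log (1-x)) (-(1-p)⁻¹) p := by
      have := (Real.hasDerivAt_log h1p.ne').comp p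
        ((hasDerivAt_const p (1:ℝ)).sub (hasDerivAt_id p))
      simpa [Function.comp_def] using this
    have hmul : HasDerivAt (fun x : ℝ => (n:ℝ)*(1-x)) (-(n:ℝ)) p := by
      simpa using ((hasDerivAt_const p (1:ℝ)).sub (hasDerivAt_id p)).const_mul (n:ℝ)
    have := hlog.mul hmul
    refine this.congr_deriv ?_
    field_simp
    ring
  have h0 : HasDerivAt (fun _ : ℝ => Real.log (n.factorial : ℝ)) 0 p := hasDerivAt_const _ _
  have htot := (((h0.sub h1).sub h2).add h3).add h4
  refine htot.congr_deriv ?_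
  ring


lemma hasDerivAt_Pn (n : ℕ) {p : ℝ} (hp : p ∈ Ioo (0:ℝ) 1) :
    HasDerivAt (Pn n)
      (Real.exp (Lf n p) *
        ((n:ℝ) * (psi ((n:ℝ)*(1-p)+1) - psi ((n:ℝ)*p+1) + Real.log p - Real.log (1-p)))) p := by
  have h := (hasDerivAt_Lf n hp).exp
  apply h.congr_of_eventuallyEq
  filter_upwards [isOpen_Ioo.mem_nhds hp] with x hx
  exact Pn_eq_exp_Lf n hx

lemma tendsto_Pn_zero (n : ℕ) : Tendsto (Pn n) (𝓝[Ioo (0:ℝ) 1] 0) (𝓝 1) := by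
  set F := 𝓝[Ioo (0:ℝ) 1] (0:ℝ)
  have hF : F ≤ 𝓝 (0:ℝ) := nhdsWithin_le_nhds
  have t1 : Tendsto (fun x : ℝ => lG ((n:ℝ)*x + 1)) F (𝓝 0) := by
    have hc : ContinuousAt lG 1 := (diffAt_lG one_pos).continuousAt
    have hin : Tendsto (fun x : ℝ => (n:ℝ)*x + 1) F (𝓝 1) := by
      have : Tendsto (fun x : ℝ => (n:ℝ)*x + 1) (𝓝 0) (𝓝 ((n:ℝ)*0 + 1)) :=
        ((continuous_const.mul continuous_id).add continuous_const).tendsto 0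
      simpa using this.mono_left hF
    have := hc.tendsto.comp hin
    simpa [lG, Real.Gamma_one, Function.comp_def] using this
  have t2 : Tendsto (fun x : ℝ => lG ((n:ℝ)*(1-x) + 1)) F (𝓝 (Real.log (n.factorial : ℝ))) := by
    have hc : ContinuousAt lG ((n:ℝ) + 1) := (diffAt_lG (by positivity)).continuousAt
    have hin : Tendsto (fun x : ℝ => (n:ℝ)*(1-x) + 1) F (𝓝 ((n:ℝ) + 1)) := by
      have : Tendsto (fun x : ℝ => (n:ℝ)*(1-x) + 1) (𝓝 0) (𝓝 ((n:ℝ)*(1-0) + 1)) :=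
        ((continuous_const.mul (continuous_const.sub continuous_id)).add continuous_const).tendsto 0
      simpa using this.mono_left hF
    have := hc.tendsto.comp hin
    simpa [lG, Real.Gamma_nat_eq_factorial n, Function.comp_def] using this
  have t3 : Tendsto (fun x : ℝ => Real.log x * ((n:ℝ)*x)) F (𝓝 0) := by
    have h0 : Tendsto (fun x : ℝ => Real.log x * x ^ (1:ℝ)) (𝓝[>] (0:ℝ)) (𝓝 0) :=
      tendsto_log_mul_rpow_nhdsGT_zero one_pos
    have hmono : F ≤ 𝓝[>] (0:ℝ) := nhdsWithin_mono _ (fun x hx => hx.1)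
    have h1 := (h0.mono_left hmono).const_mul (n:ℝ)
    have he : (fun x : ℝ => Real.log x * ((n:ℝ)*x)) =
        fun x : ℝ => (n:ℝ) * (Real.log x * x ^ (1:ℝ)) := by
      funext x; rw [Real.rpow_one]; ring
    rw [he]
    simpa using h1
  have t4 : Tendsto (fun x : ℝ => Real.log (1-x) * ((n:ℝ)*(1-x))) F (𝓝 0) := by
    have hc : ContinuousAt (fun x : ℝ => Real.log (1-x) * ((n:ℝ)*(1-x))) 0 := by
      have hsub : ContinuousAt (fun x : ℝ => 1 - x) 0 := continuousAt_const.sub continuousAt_id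
      exact (ContinuousAt.log hsub (by norm_num)).mul (continuousAt_const.mul hsub)
    have := hc.tendsto.mono_left hF
    simpa using this
  have tL : Tendsto (Lf n) F (𝓝 0) := by
    have := ((((tendsto_const_nhds (x := Real.log (n.factorial : ℝ)) (f := F)).sub t1).sub
      t2).add t3).add t4
    show Tendsto (fun x => Lf n x) F _
    simpa [Lf] using this
  have texp : Tendsto (fun x => Real.exp (Lf n x)) F (𝓝 1) := by
    simpa [Function.comp_def] using (Real.continuous_exp.tendsto 0).comp tL
  apply texp.congr'
  filter_upwards [self_mem_nhdsWithin] with x hx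
  exact (Pn_eq_exp_Lf n hx).symm

lemma fp_le (n : ℕ) {p : ℝ} (hp : p ∈ Ioo (0:ℝ) 1)
    (huniq : ∀ q ∈ Set.Ioo (0:ℝ) 1, Pn n q = q → q = p)
    {x₀ : ℝ} (hx₀ : x₀ ∈ Ioo (0:ℝ) 1) (h : Pn n x₀ ≤ x₀) : p ≤ x₀ := by
  by_contra h'
  push_neg at h'
  have hlt : Pn n x₀ < x₀ := by
    rcases lt_or_eq_of_le h with h1 | h1
    · exact h1
    · exact absurd (huniq x₀ hx₀ h1) (ne_of_lt h')
  have hne : NeBot (𝓝[Ioo (0:ℝ) 1] (0:ℝ)) := left_nhdsWithin_Ioo_neBot one_pos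
  have ev1 : ∀ᶠ x in 𝓝[Ioo (0:ℝ) 1] (0:ℝ), (3:ℝ)/4 < Pn n x :=
    (tendsto_Pn_zero n).eventually (eventually_gt_nhds (by norm_num))
  have ev2 : ∀ᶠ x in 𝓝[Ioo (0:ℝ) 1] (0:ℝ), x < min x₀ (3/4) := by
    apply Filter.eventually_of_mem (mem_nhdsWithin_of_mem_nhds (Iio_mem_nhds ?_))
    · exact fun x hx => hx
    · exact lt_min hx₀.1 (by norm_num)
  have ev3 : ∀ᶠ x in 𝓝[Ioo (0:ℝ) 1] (0:ℝ), x ∈ Ioo (0:ℝ) 1 := self_mem_nhdsWithin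
  obtain ⟨x₁, h1, h2, h3⟩ := (ev1.and (ev2.and ev3)).exists
  have hx₁x₀ : x₁ < x₀ := (lt_min_iff.mp h2).1
  have hfx₁ : x₁ < Pn n x₁ := by
    have := (lt_min_iff.mp h2).2
    linarith
  have hcont : ContinuousOn (fun x => Pn n x - x) (Icc x₁ x₀) := by
    intro x hx
    have hxI : x ∈ Ioo (0:ℝ) 1 := ⟨lt_of_lt_of_le h3.1 hx.1, lt_of_le_of_lt hx.2 hx₀.2⟩
    exact ((hasDerivAt_Pn n hxI).continuousAt.sub continuousAt_id).continuousWithinAt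
  have hivt := intermediate_value_Icc' hx₁x₀.le hcont
  have h0mem : (0:ℝ) ∈ Icc (Pn n x₀ - x₀) (Pn n x₁ - x₁) := ⟨by linarith, by linarith⟩
  obtain ⟨c, hc, hc0⟩ := hivt h0mem
  have hcfix : Pn n c = c := by linarith [sub_eq_zero.mp hc0]
  have hcI : c ∈ Ioo (0:ℝ) 1 := ⟨lt_of_lt_of_le h3.1 hc.1, lt_of_le_of_lt hc.2 hx₀.2⟩
  have hcp := huniq c hcI hcfix
  have hlt2 : c < p := lt_of_le_of_lt hc.2 h'
  rw [hcp] at hlt2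
  exact lt_irrefl _ hlt2

lemma Pn_half (n : ℕ) :
    Pn n (1/2) = (n.factorial : ℝ) / (Real.Gamma ((n:ℝ)/2 + 1))^2 * (1/2:ℝ)^(n:ℕ) := by
  have h1 : (1:ℝ) - 1/2 = 1/2 := by norm_num
  rw [Pn, gbinom, h1]
  rw [show (n:ℝ) * (1/2) = (n:ℝ)/2 by ring, show (n:ℝ) - (n:ℝ)/2 = (n:ℝ)/2 by ring]
  rw [mul_assoc, ← Real.rpow_add (by norm_num : (0:ℝ) < 1/2),
    show (n:ℝ)/2 + (n:ℝ)/2 = ((n:ℕ):ℝ) by ring, Real.rpow_natCast, sq]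

lemma two_mul_centralBinom_le (m : ℕ) (hm : 1 ≤ m) : 2 * Nat.centralBinom m ≤ 4^m := by
  induction m with
  | zero => omega
  | succ k ih =>
    rcases Nat.eq_or_lt_of_le hm with h | h
    · have : k = 0 := by omega
      subst this
      decide
    · have hk : 1 ≤ k := by omega
      have hrec := Nat.succ_mul_centralBinom_succ k
      have h2 : 2 * Nat.centralBinom k ≤ 4^k := ih hk
      have : (k+1) * (2 * Nat.centralBinom (k+1)) = 2 * (2*k+1) * (2 * Nat.centralBinom k) := by
        rw [show (k+1) * (2 * Nat.centralBinom (k+1)) = 2 * ((k + 1) * Nat.centralBinom (k + 1))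
          by ring, hrec]; ring
      have h3 : (k+1) * (2 * Nat.centralBinom (k+1)) ≤ 2 * (2*k+1) * 4^k := by
        rw [this]; exact Nat.mul_le_mul_left _ h2
      have h4 : 2 * (2*k+1) * 4^k ≤ (k+1) * 4^(k+1) := by
        have : 2 * (2*k+1) ≤ (k+1) * 4 := by omega
        calc 2 * (2*k+1) * 4^k ≤ (k+1) * 4 * 4^k := Nat.mul_le_mul_right _ this
          _ = (k+1) * 4^(k+1) := by ring
      exact Nat.le_of_mul_le_mul_left (h3.trans h4) (by omega)

lemma Pn_half_even (m : ℕ) (hm : 1 ≤ m) : Pn (2*m) (1/2) ≤ 1/2 := by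
  rw [Pn_half]
  have h1 : ((2*m : ℕ):ℝ)/2 + 1 = (m:ℝ) + 1 := by push_cast; ring
  rw [h1, Real.Gamma_nat_eq_factorial m]
  have hfac : ((2*m).factorial : ℝ) = (Nat.centralBinom m : ℝ) * (m.factorial : ℝ)^2 := by
    have := Nat.choose_mul_factorial_mul_factorial (by omega : m ≤ 2*m)
    have h2 : 2*m - m = m := by omega
    rw [h2] at this
    have : Nat.centralBinom m * m.factorial * m.factorial = (2*m).factorial := by
      rw [Nat.centralBinom]; exact this
    rw [← this]; push_cast; ring
  rw [hfac]
  have hm2 : (0:ℝ) < (m.factorial : ℝ)^2 := by positivity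
  have hkey : (Nat.centralBinom m : ℝ) ≤ 4^m / 2 := by
    have := two_mul_centralBinom_le m hm
    have := (Nat.cast_le (α := ℝ)).mpr this
    push_cast at this
    linarith
  calc (Nat.centralBinom m : ℝ) * (m.factorial:ℝ)^2 / ((m.factorial:ℝ))^2 * (1/2:ℝ)^(2*m)
      = (Nat.centralBinom m : ℝ) * (1/2:ℝ)^(2*m) := by field_simp
    _ ≤ (4^m / 2) * (1/2:ℝ)^(2*m) := by
        apply mul_le_mul_of_nonneg_right hkey (by positivity)
    _ = 1/2 := by
        rw [show (2*m) = m + m by ring, pow_add]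
        have : ((1:ℝ)/2)^m * (1/2:ℝ)^m = (1/4:ℝ)^m := by
          rw [← mul_pow]; norm_num
        rw [this]
        rw [show ((4:ℝ))^m / 2 * (1/4:ℝ)^m = (4 * (1/4) : ℝ)^m / 2 by rw [mul_pow]; ring]
        norm_num

lemma Gamma_nat_add_half (m : ℕ) :
    Real.Gamma ((m:ℝ) + 3/2) =
      Real.sqrt π * ((2*m+1).factorial : ℝ) / (4^m * (m.factorial : ℝ) * 2) := by
  induction m with
  | zero =>
    simp only [Nat.cast_zero, zero_add]
    rw [show (3/2 : ℝ) = 1/2 + 1 by norm_num, Real.Gamma_add_one (by norm_num),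
      Real.Gamma_one_half_eq]
    norm_num [Nat.factorial]
    ring
  | succ k ih =>
    have h1 : ((k+1 : ℕ):ℝ) + 3/2 = ((k:ℝ) + 3/2) + 1 := by push_cast; ring
    rw [h1, Real.Gamma_add_one (by positivity), ih]
    have h2 : (2*(k+1)+1).factorial = (2*k+3) * ((2*k+2) * (2*k+1).factorial) := by
      rw [show 2*(k+1)+1 = (2*k+2)+1 by ring, Nat.factorial_succ,
        show (2*k+2) = (2*k+1)+1 by ring, Nat.factorial_succ]
    have h3 : (k+1).factorial = (k+1) * k.factorial := Nat.factorial_succ k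
    rw [h2, h3]
    have hf : (0:ℝ) < (k.factorial : ℝ) := by exact_mod_cast k.factorial_pos
    push_cast
    field_simp
    all_goals ring

lemma odd_fac_ineq (m : ℕ) (hm : 1 ≤ m) :
    4^(m+1) * (m.factorial)^2 ≤ 3 * (2*m+1).factorial := by
  induction m with
  | zero => omega
  | succ k ih =>
    rcases Nat.eq_or_lt_of_le hm with h | h
    · simp [← h]; decide
    · have hk : 1 ≤ k := by omega
      have ih2 := ih hk
      have h2 : (2*(k+1)+1).factorial = (2*k+3) * (2*k+2) * (2*k+1).factorial := by
        rw [show 2*(k+1)+1 = (2*k+2)+1 by ring, Nat.factorial_succ,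
          show (2*k+2) = (2*k+1)+1 by ring, Nat.factorial_succ]
        ring
      have h3 : ((k+1).factorial)^2 = (k+1)^2 * (k.factorial)^2 := by
        rw [Nat.factorial_succ]; ring
      rw [h2, h3]
      calc 4^(k+1+1) * ((k+1)^2 * k.factorial^2) = 4*(k+1)^2 * (4^(k+1) * k.factorial^2) := by ring
        _ ≤ 4*(k+1)^2 * (3 * (2*k+1).factorial) := Nat.mul_le_mul_left _ ih2
        _ ≤ 3 * ((2*k+3) * (2*k+2) * (2*k+1).factorial) := by
            have : 4*(k+1)^2 ≤ (2*k+3)*(2*k+2) := by nlinarith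
            calc 4*(k+1)^2 * (3 * (2*k+1).factorial)
                = (4*(k+1)^2) * 3 * (2*k+1).factorial := by ring
              _ ≤ ((2*k+3)*(2*k+2)) * 3 * (2*k+1).factorial := by
                  exact Nat.mul_le_mul_right _ (Nat.mul_le_mul_right _ this)
              _ = 3 * ((2*k+3) * (2*k+2) * (2*k+1).factorial) := by ring

lemma Pn_half_odd (m : ℕ) (hm : 1 ≤ m) : Pn (2*m+1) (1/2) ≤ 1/2 := by
  rw [Pn_half]
  have h1 : ((2*m+1 : ℕ):ℝ)/2 + 1 = (m:ℝ) + 3/2 := by push_cast; ring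
  rw [h1, _root_.Gamma_nat_add_half]
  have hsq : (Real.sqrt π * ((2*m+1).factorial : ℝ) / (4^m * (m.factorial : ℝ) * 2))^2
      = π * ((2*m+1).factorial : ℝ)^2 / ((4^m * (m.factorial : ℝ) * 2)^2) := by
    rw [div_pow, mul_pow, Real.sq_sqrt Real.pi_pos.le]
  rw [hsq]
  have hfacpos : (0:ℝ) < ((2*m+1).factorial : ℝ) := by exact_mod_cast (2*m+1).factorial_pos
  have hmfacpos : (0:ℝ) < ((m.factorial : ℝ)) := by exact_mod_cast m.factorial_pos
  have hpow : ((1:ℝ)/2)^(2*m+1 : ℕ) = 1/(2^(2*m+1)) := by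
    rw [div_pow, one_pow]
  have hpi : (3:ℝ) ≤ π := Real.pi_gt_three.le
  have h2m : (2:ℝ)^(2*m+1) = 2 * 4^m := by
    rw [pow_add, pow_mul]; norm_num [mul_comm]
  have h4pos : (0:ℝ) < (4:ℝ)^m := by positivity
  have hEq : (((2*m+1).factorial : ℝ) /
        (π * ((2*m+1).factorial : ℝ)^2 / (4^m * (m.factorial : ℝ) * 2)^2)) * ((1:ℝ)/2)^(2*m+1)
      = 2 * 4^m * ((m.factorial : ℝ))^2 / (π * ((2*m+1).factorial : ℝ)) := by
    rw [hpow, h2m]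
    field_simp
    all_goals ring
  rw [hEq, div_le_iff₀ (by positivity)]
  have hineq : (4:ℝ)^(m+1) * ((m.factorial : ℝ))^2 ≤ 3 * ((2*m+1).factorial : ℝ) := by
    exact_mod_cast odd_fac_ineq m hm
  rw [pow_succ] at hineq
  have h3F : (3:ℝ) * ((2*m+1).factorial : ℝ) ≤ π * ((2*m+1).factorial : ℝ) :=
    mul_le_mul_of_nonneg_right hpi hfacpos.le
  linarith

lemma Pn_half_le (n : ℕ) (hn : 2 ≤ n) : Pn n (1/2) ≤ 1/2 := by
  rcases Nat.even_or_odd n with ⟨m, hm⟩ | ⟨m, hm⟩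
  · have hm1 : 1 ≤ m := by omega
    have := Pn_half_even m hm1
    rwa [show 2*m = n by omega] at this
  · have hm1 : 1 ≤ m := by omega
    have := Pn_half_odd m hm1
    rwa [show 2*m+1 = n by omega] at this

lemma Gamma_prod_ge : π/4 ≤ Real.Gamma (17/10) * Real.Gamma (13/10) := by
  have hG1 : 0 < Real.Gamma (13/10 : ℝ) := Real.Gamma_pos_of_pos (by norm_num)
  have hG2 : 0 < Real.Gamma (17/10 : ℝ) := Real.Gamma_pos_of_pos (by norm_num)
  have h := convexOn_lG.2 (x := (13/10 : ℝ)) (y := (17/10 : ℝ))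
    (by norm_num) (by norm_num)
    (by norm_num : (0:ℝ) ≤ 1/2) (by norm_num : (0:ℝ) ≤ 1/2) (by norm_num)
  have he : (1/2 : ℝ) • (13/10 : ℝ) + (1/2 : ℝ) • (17/10 : ℝ) = 3/2 := by
    simp [smul_eq_mul]; norm_num
  rw [he, smul_eq_mul, smul_eq_mul] at h
  have h32 : Real.Gamma (3/2 : ℝ) = Real.sqrt π / 2 := by
    rw [show (3/2 : ℝ) = 1/2 + 1 by norm_num, Real.Gamma_add_one (by norm_num),
      Real.Gamma_one_half_eq]
    ring
  have hlog : Real.log (π/4) ≤ Real.log (Real.Gamma (17/10) * Real.Gamma (13/10)) := by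
    have e1 : Real.log (π/4) = 2 * lG (3/2 : ℝ) := by
      rw [lG, h32]
      rw [show Real.sqrt π / 2 = Real.sqrt π * (1/2) by ring, Real.log_mul
        (Real.sqrt_ne_zero'.mpr Real.pi_pos) (by norm_num)]
      rw [show (π/4 : ℝ) = π * (1/4) by ring, Real.log_mul Real.pi_pos.ne' (by norm_num)]
      rw [← Real.sq_sqrt Real.pi_pos.le, Real.log_pow]
      push_cast
      rw [show ((1:ℝ)/4) = (1/2)*(1/2) by norm_num, Real.log_mul (by norm_num) (by norm_num)]
      rw [Real.sq_sqrt Real.pi_pos.le]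
      ring
    have e2 : Real.log (Real.Gamma (17/10) * Real.Gamma (13/10))
        = lG (13/10 : ℝ) + lG (17/10 : ℝ) := by
      rw [Real.log_mul hG2.ne' hG1.ne', lG, lG]; ring
    rw [e1, e2]; linarith
  have := Real.exp_le_exp.mpr hlog
  rwa [Real.exp_log (by positivity), Real.exp_log (by positivity)] at this

lemma Pn_one_lt : Pn 1 (7/10) < 7/10 := by
  have hPn : Pn 1 (7/10) = 1/(Real.Gamma (17/10) * Real.Gamma (13/10)) *
      ((7/10:ℝ) ^ ((7:ℝ)/10) * (3/10:ℝ) ^ ((3:ℝ)/10)) := by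
    rw [Pn, gbinom, Nat.cast_one, Nat.factorial_one, Nat.cast_one]
    rw [show (1:ℝ)*(7/10) = (7:ℝ)/10 by norm_num,
      show (1:ℝ)*(1 - 7/10) = (3:ℝ)/10 by norm_num,
      show (7:ℝ)/10 + 1 = 17/10 by norm_num,
      show (1:ℝ) - 7/10 + 1 = 13/10 by norm_num,
      show (1:ℝ) - 7/10 = 3/10 by norm_num]
    ring
  set X : ℝ := (7/10:ℝ) ^ ((7:ℝ)/10) * (3/10:ℝ) ^ ((3:ℝ)/10) with hXdef
  have hXpos : 0 < X := by
    apply mul_pos <;> exact Real.rpow_pos_of_pos (by norm_num) _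
  have hX10 : X^(10:ℕ) = (7/10:ℝ)^(7:ℕ) * (3/10:ℝ)^(3:ℕ) := by
    rw [hXdef, mul_pow]
    rw [← Real.rpow_natCast ((7/10:ℝ) ^ ((7:ℝ)/10)) 10, ← Real.rpow_natCast ((3/10:ℝ) ^ ((3:ℝ)/10)) 10]
    rw [← Real.rpow_mul (by norm_num : (0:ℝ) ≤ 7/10), ← Real.rpow_mul (by norm_num : (0:ℝ) ≤ 3/10)]
    rw [show (7:ℝ)/10 * ((10:ℕ):ℝ) = ((7:ℕ):ℝ) by push_cast; ring,
      show (3:ℝ)/10 * ((10:ℕ):ℝ) = ((3:ℕ):ℝ) by push_cast; ring]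
    rw [Real.rpow_natCast, Real.rpow_natCast]
  have hXlt : X < 7*π/40 := by
    have hb : (0:ℝ) ≤ 7*π/40 := by positivity
    apply lt_of_pow_lt_pow_left₀ 10 hb
    rw [hX10]
    have hlow : (7*(3141592/1000000 : ℝ)/40)^(10:ℕ) ≤ (7*π/40)^(10:ℕ) := by
      apply pow_le_pow_left₀ (by norm_num)
      have := Real.pi_gt_d6
      linarith
    refine lt_of_lt_of_le ?_ hlow
    norm_num
  have hGpos : 0 < Real.Gamma (17/10) * Real.Gamma (13/10) := by
    apply mul_pos <;> exact Real.Gamma_pos_of_pos (by norm_num)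
  have h1 : 1/(Real.Gamma (17/10) * Real.Gamma (13/10)) ≤ 4/π := by
    rw [div_le_div_iff₀ hGpos Real.pi_pos]
    have := Gamma_prod_ge
    linarith
  calc Pn 1 (7/10) = 1/(Real.Gamma (17/10) * Real.Gamma (13/10)) * X := hPn
    _ ≤ (4/π) * X := mul_le_mul_of_nonneg_right h1 hXpos.le
    _ < (4/π) * (7*π/40) := by
        apply mul_lt_mul_of_pos_left hXlt (by positivity)
    _ = 7/10 := by field_simp; ring

lemma log_le_of_pow {y r : ℝ} (k : ℕ) (hy : 0 < y) (hr : 1 ≤ r) (h : y ≤ r^k) :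
    Real.log y ≤ k*(r-1) := by
  calc Real.log y ≤ Real.log (r^k) := Real.log_le_log hy h
    _ = k * Real.log r := by rw [Real.log_pow]
    _ ≤ k * (r-1) := by
        apply mul_le_mul_of_nonneg_left (Real.log_le_sub_one_of_pos (by linarith)) (by positivity)

lemma f_nonneg {z : ℝ} (hz : 0 < z) : 0 ≤ psi (z+1) - Real.log z := by
  have := psi_ge' hz; linarith

lemma f_upper {z : ℝ} (hz : 0 < z) : psi (z+1) - Real.log z < 1/z := by
  have h1 := psi_le hz
  have h3 : Real.log ((z+1)/z) < (z+1)/z - 1 := by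
    apply Real.log_lt_sub_one_of_pos (by positivity)
    intro hcon
    rw [div_eq_one_iff_eq hz.ne'] at hcon
    linarith
  rw [Real.log_div (by linarith : z+1 ≠ 0) hz.ne'] at h3
  have h4 : (z+1)/z - 1 = 1/z := by field_simp; ring
  linarith

lemma f_upper_log {z : ℝ} (hz : 0 < z) :
    psi (z+1) - Real.log z ≤ Real.log ((z+1)/z) := by
  have := psi_le hz
  rw [Real.log_div (by linarith : z+1 ≠ 0) hz.ne']
  linarith

lemma f_lower {z : ℝ} (hz : 0 < z) : 1/(2*z+1)^2 ≤ psi (z+1) - Real.log z := by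
  have h1 := psi_ge hz
  set t := (z+1/2)^2/(z*(z+1)) with htdef
  have hne1 : ((z+1/2)^2 : ℝ) ≠ 0 := by positivity
  have hne2 : ((2*z+1)^2 : ℝ) ≠ 0 := by positivity
  have hne3 : (z*(z+1) : ℝ) ≠ 0 := by positivity
  have ht : 0 < t := by rw [htdef]; positivity
  have hlt : Real.log t = 2*Real.log (z+1/2) - Real.log (z+1) - Real.log z := by
    rw [htdef, Real.log_div hne1 hne3, Real.log_mul hz.ne' (by positivity : (0:ℝ) < z+1).ne',
      Real.log_pow]
    push_cast; ring
  have hge : 1 - 1/t ≤ Real.log t := by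
    have := Real.log_le_sub_one_of_pos (show (0:ℝ) < 1/t by positivity)
    rw [one_div, Real.log_inv, inv_eq_one_div] at this
    linarith
  have heq : 1 - 1/t = 1/(2*z+1)^2 := by
    rw [htdef]
    field_simp
    ring
  linarith

/-- For every positive integer `n`, if `p ∈ (0,1)` is the unique fixed point of `P_n`
in `(0,1)`, then `|P_n'(p)| < 1`. -/
theorem abs_deriv_at_fixed_point_lt_one (n : ℕ) (hn : 0 < n)
    (p : ℝ) (hp : p ∈ Set.Ioo (0:ℝ) 1) (hfix : Pn n p = p)
    (huniq : ∀ q ∈ Set.Ioo (0:ℝ) 1, Pn n q = q → q = p) :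
    |deriv (Pn n) p| < 1 := by
  obtain ⟨hp0, hp1⟩ := hp
  have hq0 : 0 < 1 - p := by linarith
  have hn0 : (0:ℝ) < n := by exact_mod_cast hn
  have hx : 0 < (n:ℝ) * p := by positivity
  have hy : 0 < (n:ℝ) * (1-p) := by positivity
  have hexp : Real.exp (Lf n p) = p := by
    rw [← Pn_eq_exp_Lf n ⟨hp0, hp1⟩]; exact hfix
  have hder : deriv (Pn n) p = p * (n:ℝ) *
      ((psi ((n:ℝ)*(1-p)+1) - Real.log ((n:ℝ)*(1-p)))
        - (psi ((n:ℝ)*p+1) - Real.log ((n:ℝ)*p))) := by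
    rw [(hasDerivAt_Pn n ⟨hp0, hp1⟩).deriv, hexp]
    rw [Real.log_mul (ne_of_gt hn0) hp0.ne', Real.log_mul (ne_of_gt hn0) hq0.ne']
    ring
  set A : ℝ := psi ((n:ℝ)*(1-p)+1) - Real.log ((n:ℝ)*(1-p)) with hAdef
  set B : ℝ := psi ((n:ℝ)*p+1) - Real.log ((n:ℝ)*p) with hBdef
  have hA0 : 0 ≤ A := f_nonneg hy
  have hB0 : 0 ≤ B := f_nonneg hx
  have hAu : A < 1/((n:ℝ)*(1-p)) := f_upper hy
  have hBu : B < 1/((n:ℝ)*p) := f_upper hx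
  clear_value A B
  rw [abs_lt]
  constructor
  · -- lower bound
    rw [hder]
    have h1 : p * (n:ℝ) * B < p * (n:ℝ) * (1/((n:ℝ)*p)) :=
      mul_lt_mul_of_pos_left hBu (by positivity)
    have h2 : p * (n:ℝ) * (1/((n:ℝ)*p)) = 1 := by field_simp
    nlinarith [mul_nonneg (mul_nonneg hp0.le hn0.le) hA0]
  · -- upper bound
    rcases eq_or_lt_of_le (Nat.succ_le_of_lt hn) with h1 | h2
    · -- n = 1
      have hne : n = 1 := h1.symm
      subst hne
      simp only [Nat.cast_one, one_mul] at hder hAdef hBdef hx hy ⊢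
      have h07 : p ≤ 7/10 :=
        fp_le 1 ⟨hp0, hp1⟩ huniq (by norm_num : (7:ℝ)/10 ∈ Ioo (0:ℝ) 1) Pn_one_lt.le
      have hBl : 1/(2*p+1)^2 ≤ B := hBdef ▸ f_lower hp0
      have hAu2 : A ≤ Real.log ((1-p+1)/(1-p)) := hAdef ▸ f_upper_log hq0
      rw [hder]
      rcases le_or_gt p (3/5) with h35 | h35
      · -- p ≤ 3/5
        have hA72 : A ≤ Real.log (7/2) := by
          refine hAu2.trans (Real.log_le_log (by positivity) ?_)
          rw [div_le_div_iff₀ hq0 (by norm_num : (0:ℝ) < 2)]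
          linarith
        have hA13 : A ≤ 16 * ((1082/1000 : ℝ) - 1) := by
          refine hA72.trans (log_le_of_pow 16 (by norm_num) (by norm_num) (by norm_num))
        have hpA : p * A ≤ (3/5) * (16 * ((1082/1000 : ℝ) - 1)) := by
          have := mul_le_mul h35 hA13 hA0 (by norm_num : (0:ℝ) ≤ 3/5)
          linarith
        have hexpand : p * 1 * (A - B) = p*A - p*B := by ring
        have hpB0 : 0 ≤ p*B := mul_nonneg hp0.le hB0
        rw [hexpand]
        linarith
      · -- 3/5 < p ≤ 7/10
        have hA133 : A ≤ Real.log (13/3) := by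
          refine hAu2.trans (Real.log_le_log (by positivity) ?_)
          rw [div_le_div_iff₀ hq0 (by norm_num : (0:ℝ) < 3)]
          linarith
        have hA13 : A ≤ 16 * ((10961/10000 : ℝ) - 1) := by
          refine hA133.trans (log_le_of_pow 16 (by norm_num) (by norm_num) (by norm_num))
        have hpA : p * A ≤ (7/10) * (16 * ((10961/10000 : ℝ) - 1)) := by
          have := mul_le_mul h07 hA13 hA0 (by norm_num : (0:ℝ) ≤ 7/10)
          linarith
        have hpB : (7:ℝ)/57.6 ≤ p * B := by
          have hq : (0:ℝ) < (2*p+1)^2 := by positivity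
          have h1 : (7:ℝ)/57.6 ≤ p * (1/(2*p+1)^2) := by
            rw [mul_one_div, div_le_div_iff₀ (by norm_num) hq]
            nlinarith [mul_nonneg (by linarith : (0:ℝ) ≤ p - 3/5) (by linarith : (0:ℝ) ≤ 7/10 - p)]
          have h2 : p * (1/(2*p+1)^2) ≤ p * B := mul_le_mul_of_nonneg_left hBl hp0.le
          linarith
        have hexpand : p * 1 * (A - B) = p*A - p*B := by ring
        rw [hexpand]
        linarith
    · -- n ≥ 2
      have hn2 : 2 ≤ n := h2
      have hhalf : p ≤ 1/2 :=
        fp_le n ⟨hp0, hp1⟩ huniq (by norm_num : (1:ℝ)/2 ∈ Ioo (0:ℝ) 1) (Pn_half_le n hn2)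
      rw [hder]
      have hstep1 : p * (n:ℝ) * (A - B) ≤ p * (n:ℝ) * A := by
        apply mul_le_mul_of_nonneg_left (by linarith : A - B ≤ A) (by positivity)
      have hstep2 : p * (n:ℝ) * A < p * (n:ℝ) * (1/((n:ℝ)*(1-p))) :=
        mul_lt_mul_of_pos_left hAu (by positivity)
      have hstep3 : p * (n:ℝ) * (1/((n:ℝ)*(1-p))) = p/(1-p) := by
        rw [mul_one_div, div_eq_div_iff (by positivity) hq0.ne']
        ring
      have hstep4 : p/(1-p) ≤ 1 := by rw [div_le_one hq0]; linarith
      linarith
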